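/- Let K be a class of finite 3-dimensional permutation structures closed under isomorphism and under substructure and having the amalgamation property. Let p, q, r, s ∈ Bool³ be pairwise distinct vectors such that each pair of them differs in exactly two coordinates. Suppose p and q are each realized in K, and suppose the following three configurations are forbidden (none occurs in any member of K): 'p ⇒ q' (points z, u, v with pattern(z,u) = p, pattern(z,v) = p, pattern(u,v) = q); the directed cycle C₃(p,q,r) (points u, v, w with pattern(u,v) = p, pattern(v,w) = q, pattern(w,u) = r); and the directed cycle C₃(p,q,s) (points u, v, w with pattern(u,v) = p, pattern(v,w) = q, pattern(w,u) = s). Then some member of K contains points x, b, y with pattern(x,b) = p, pattern(b,y) = q, and pattern(x,y) = q. -/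

import Mathlib

/-- A finite `n`-dimensional permutation structure. -/
structure FinPermStruct (n : ℕ) where
  carrier : Type
  fin : Fintype carrier
  lt : Fin n → carrier → carrier → Prop
  strict : ∀ i, IsStrictTotalOrder carrier (lt i)

/-- An embedding of finite `n`-dimensional permutation structures. -/
def IsEmb {n : ℕ} (A B : FinPermStruct n) (f : A.carrier → B.carrier) : Prop :=
  Function.Injective f ∧ ∀ x y i, A.lt i x y ↔ B.lt i (f x) (f y)

/-- The pattern (2-type) of an ordered pair of distinct points. -/
def Pattern {n : ℕ} {M : Type*} (lt : Fin n → M → M → Prop) (x y : M)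
    (v : Fin n → Bool) : Prop :=
  x ≠ y ∧ ∀ i, lt i x y ↔ v i = true

/-- A 2-type `v` is realized in the class `K`. -/
def Realized {n : ℕ} (K : FinPermStruct n → Prop) (v : Fin n → Bool) : Prop :=
  ∃ B, K B ∧ ∃ x y : B.carrier, Pattern B.lt x y v

lemma key_bool : ∀ p q r s t : Fin 3 → Bool,
    (Finset.univ.filter fun i => p i ≠ q i).card = 2 →
    (Finset.univ.filter fun i => p i ≠ r i).card = 2 →
    (Finset.univ.filter fun i => p i ≠ s i).card = 2 →
    (Finset.univ.filter fun i => q i ≠ r i).card = 2 →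
    (Finset.univ.filter fun i => q i ≠ s i).card = 2 →
    (Finset.univ.filter fun i => r i ≠ s i).card = 2 →
    (∀ i, p i = q i → t i = p i) →
    t = q ∨ t = p ∨ t = (fun i => !(r i)) ∨ t = (fun i => !(s i)) := by decide

lemma emb_pattern {n : ℕ} {A B : FinPermStruct n} {f : A.carrier → B.carrier}
    (hf : IsEmb A B f) {x y : A.carrier} {v : Fin n → Bool}
    (h : Pattern A.lt x y v) : Pattern B.lt (f x) (f y) v := by
  obtain ⟨hxy, h⟩ := h
  exact ⟨fun e => hxy (hf.1 e), fun i => ((hf.2 x y i).symm).trans (h i)⟩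

lemma lt_flip {n : ℕ} (C : FinPermStruct n) {x y : C.carrier} (hxy : x ≠ y)
    (i : Fin n) : C.lt i y x ↔ ¬ C.lt i x y := by
  have h := C.strict i
  constructor
  · intro h1 h2
    exact h.toIsStrictOrder.toIrrefl.irrefl x
      (h.toIsStrictOrder.toIsTrans.trans _ _ _ h2 h1)
  · intro h1
    by_contra h2
    exact hxy (h.trichotomous x y h1 h2)

lemma pattern_rev {n : ℕ} (C : FinPermStruct n) {x y : C.carrier}
    {v : Fin n → Bool} (h : Pattern C.lt x y v) :
    Pattern C.lt y x (fun i => !(v i)) := by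
  obtain ⟨hxy, h⟩ := h
  refine ⟨hxy.symm, fun i => ?_⟩
  rw [lt_flip C hxy, h i]
  simp

/-- The one-point permutation structure. -/
def onePt (n : ℕ) : FinPermStruct n where
  carrier := Unit
  fin := inferInstance
  lt := fun _ _ _ => False
  strict := fun _ =>
    { trichotomous := fun _ _ _ _ => rfl
      irrefl := fun _ h => h
      trans := fun _ _ _ h => h.elim }

/-- in a hereditary, isomorphism-closed amalgamation class of
finite 3-dimensional permutation structures, with `p,q,r,s` pairwise at
Hamming distance 2, `p` and `q` realized, and `p ⇒ q`, `C₃(p,q,r)` and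
`C₃(p,q,s)` all forbidden, the configuration `q ⇐ p` is realized. -/
theorem stmt_16 (K : FinPermStruct 3 → Prop)
    (hiso : ∀ A B, K A →
      (∃ f : B.carrier → A.carrier, Function.Bijective f ∧ IsEmb B A f) → K B)
    (hsub : ∀ A B, K B → (∃ f, IsEmb A B f) → K A)
    (hap : ∀ (A B₁ B₂ : FinPermStruct 3) (f₁ : A.carrier → B₁.carrier)
      (f₂ : A.carrier → B₂.carrier),
      K A → K B₁ → K B₂ → IsEmb A B₁ f₁ → IsEmb A B₂ f₂ →
      ∃ (C : FinPermStruct 3) (g₁ : B₁.carrier → C.carrier)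
        (g₂ : B₂.carrier → C.carrier),
        K C ∧ IsEmb B₁ C g₁ ∧ IsEmb B₂ C g₂ ∧ ∀ a, g₁ (f₁ a) = g₂ (f₂ a))
    (p q r s : Fin 3 → Bool)
    (hpq : (Finset.univ.filter fun i => p i ≠ q i).card = 2)
    (hpr : (Finset.univ.filter fun i => p i ≠ r i).card = 2)
    (hps : (Finset.univ.filter fun i => p i ≠ s i).card = 2)
    (hqr : (Finset.univ.filter fun i => q i ≠ r i).card = 2)
    (hqs : (Finset.univ.filter fun i => q i ≠ s i).card = 2)
    (hrs : (Finset.univ.filter fun i => r i ≠ s i).card = 2)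
    (hp : Realized K p) (hq : Realized K q)
    -- `p ⇒ q` is forbidden
    (hforb₁ : ¬ ∃ B, K B ∧ ∃ z u v : B.carrier,
      Pattern B.lt z u p ∧ Pattern B.lt z v p ∧ Pattern B.lt u v q)
    -- `C₃(p,q,r)` is forbidden
    (hforb₂ : ¬ ∃ B, K B ∧ ∃ u v w : B.carrier,
      Pattern B.lt u v p ∧ Pattern B.lt v w q ∧ Pattern B.lt w u r)
    -- `C₃(p,q,s)` is forbidden
    (hforb₃ : ¬ ∃ B, K B ∧ ∃ u v w : B.carrier,
      Pattern B.lt u v p ∧ Pattern B.lt v w q ∧ Pattern B.lt w u s) :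
    ∃ B, K B ∧ ∃ x b y : B.carrier,
      Pattern B.lt x b p ∧ Pattern B.lt b y q ∧ Pattern B.lt x y q := by
  classical
  obtain ⟨B₁, hKB₁, x₀, b₀, hpat₁⟩ := hp
  obtain ⟨B₂, hKB₂, b₁, y₁, hpat₂⟩ := hq
  -- the one-point structure embeds into B₁
  have hemb₁ : IsEmb (onePt 3) B₁ (fun _ => b₀) := by
    refine ⟨fun a b _ => rfl, fun a b i => ?_⟩
    simp only [onePt, false_iff]
    exact (B₁.strict i).toIsStrictOrder.toIrrefl.irrefl b₀
  have hemb₂ : IsEmb (onePt 3) B₂ (fun _ => b₁) := by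
    refine ⟨fun a b _ => rfl, fun a b i => ?_⟩
    simp only [onePt, false_iff]
    exact (B₂.strict i).toIsStrictOrder.toIrrefl.irrefl b₁
  have hKA : K (onePt 3) := hsub _ B₁ hKB₁ ⟨_, hemb₁⟩
  obtain ⟨C, g₁, g₂, hKC, hg₁, hg₂, hcomm⟩ :=
    hap (onePt 3) B₁ B₂ (fun _ => b₀) (fun _ => b₁) hKA hKB₁ hKB₂ hemb₁ hemb₂
  set x := g₁ x₀ with hx
  set b := g₁ b₀ with hb
  set y := g₂ y₁ with hy
  have hbeq : b = g₂ b₁ := hcomm ()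
  have pat_xb : Pattern C.lt x b p := emb_pattern hg₁ hpat₁
  have pat_by : Pattern C.lt b y q := by
    rw [hbeq]; exact emb_pattern hg₂ hpat₂
  -- x ≠ y
  have hxy : x ≠ y := by
    intro he
    have hall : ∀ i, p i ≠ q i := by
      intro i hpi
      have h1 := (pat_xb.2 i)
      have h2 := (pat_by.2 i)
      rw [← he] at h2
      rw [lt_flip C pat_xb.1 i, h1, hpi] at h2
      cases q i <;> simp at h2
    have : (Finset.univ.filter fun i => p i ≠ q i) = Finset.univ :=
      Finset.filter_true_of_mem (fun i _ => hall i)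
    rw [this] at hpq
    simp at hpq
  -- the pattern of (x, y)
  set t : Fin 3 → Bool := fun i => decide (C.lt i x y) with ht
  have pat_xy : Pattern C.lt x y t := by
    refine ⟨hxy, fun i => ?_⟩
    simp [ht]
  -- t agrees with p on coordinates where p = q
  have hagree : ∀ i, p i = q i → t i = p i := by
    intro i hpi
    have h1 := pat_xb.2 i
    have h2 := pat_by.2 i
    have htrans := (C.strict i).toIsStrictOrder.toIsTrans.trans
    cases hv : p i with
    | true =>
      have hxb : C.lt i x b := h1.mpr hv
      have hby : C.lt i b y := h2.mpr (by rw [← hpi, hv])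
      exact decide_eq_true (htrans _ _ _ hxb hby)
    | false =>
      have hxb : ¬ C.lt i x b := by rw [h1, hv]; simp
      have hby : ¬ C.lt i b y := by rw [h2, ← hpi, hv]; simp
      have hbx : C.lt i b x := (lt_flip C pat_xb.1 i).mpr hxb
      have hyb : C.lt i y b := (lt_flip C pat_by.1 i).mpr hby
      have hyx : C.lt i y x := htrans _ _ _ hyb hbx
      have : ¬ C.lt i x y := (lt_flip C hxy i).mp hyx
      simpa [ht] using this
  rcases key_bool p q r s t hpq hpr hps hqr hqs hrs hagree with h | h | h | h
  · exact ⟨C, hKC, x, b, y, pat_xb, pat_by, h ▸ pat_xy⟩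
  · exact absurd ⟨C, hKC, x, b, y, pat_xb, h ▸ pat_xy, pat_by⟩ hforb₁
  · refine absurd ⟨C, hKC, x, b, y, pat_xb, pat_by, ?_⟩ hforb₂
    have := pattern_rev C pat_xy
    rw [h] at this
    have he : (fun i => !(!(r i))) = r := funext fun i => Bool.not_not _
    rwa [he] at this
  · refine absurd ⟨C, hKC, x, b, y, pat_xb, pat_by, ?_⟩ hforb₃
    have := pattern_rev C pat_xy
    rw [h] at this
    have he : (fun i => !(!(s i))) = s := funext fun i => Bool.not_not _
    rwa [he] at this
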